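/- Let X be a Banach space and f : X → ℝ ∪ {+∞} proper, convex, lower semicontinuous. If for every x and every p ∈ ∂f(x) one has p(x) ≥ 0, then 0 ∈ ∂f(0), i.e., 0 is a global minimizer of f. -/

import Mathlib

open Set Filter Topology

variable {X : Type*} [NormedAddCommGroup X] [NormedSpace ℝ X] [CompleteSpace X]

/-- The convex subdifferential of an extended-real-valued function. -/
def Subdiff (f : X → EReal) (x : X) : Set (X →L[ℝ] ℝ) :=
  {p | ∀ y : X, f x + ((p (y - x) : ℝ) : EReal) ≤ f y}

/-- The ε-subdifferential. -/
def EpsSubdiff (f : X → EReal) (ε : ℝ) (x : X) : Set (X →L[ℝ] ℝ) :=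
  {p | ∀ y : X, f x + ((p (y - x) - ε : ℝ) : EReal) ≤ f y}

/-- f is proper: never -∞ and not identically +∞. -/
def EProper (f : X → EReal) : Prop := (∃ x, f x ≠ ⊤) ∧ ∀ x, f x ≠ ⊥

/-- Convexity of an extended-real-valued function. -/
def EConvex (f : X → EReal) : Prop :=
  ∀ x y : X, ∀ t : ℝ, 0 ≤ t → t ≤ 1 →
    f (t • x + (1 - t) • y) ≤ ((t : ℝ) : EReal) * f x + (((1 - t : ℝ)) : EReal) * f y

lemma ereal_add_coe_le_coe_iff (a : EReal) (c r : ℝ) :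
    a + (c : EReal) ≤ (r : EReal) ↔ a ≤ ((r - c : ℝ) : EReal) := by
  induction a using EReal.rec with
  | bot => simp
  | coe x =>
      rw [← EReal.coe_add, EReal.coe_le_coe_iff, EReal.coe_le_coe_iff]
      constructor <;> intro <;> linarith
  | top =>
      rw [EReal.top_add_coe]
      simp only [top_le_iff]
      simp [EReal.coe_ne_top]
      rw [← EReal.coe_sub]
      exact EReal.coe_ne_top _

def EpiS (f : X → EReal) : Set (X × ℝ) := {q | f q.1 ≤ (q.2 : EReal)}

omit [CompleteSpace X] in
lemma isClosed_epiS {f : X → EReal} (hlsc : LowerSemicontinuous f) : IsClosed (EpiS f) := by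
  rw [← isOpen_compl_iff, isOpen_iff_mem_nhds]
  rintro ⟨x, t⟩ hq
  simp only [EpiS, mem_compl_iff, mem_setOf_eq, not_le] at hq
  obtain ⟨y, hty, hyf⟩ := EReal.lt_iff_exists_real_btwn.1 hq
  have h1 : {z | (y : EReal) < f z} ∈ 𝓝 x := hlsc x (y : EReal) hyf
  have h2 : Iio y ∈ 𝓝 t := Iio_mem_nhds (EReal.coe_lt_coe_iff.1 hty)
  refine Filter.mem_of_superset (prod_mem_nhds h1 h2) ?_
  rintro ⟨z, s⟩ ⟨hz, hs⟩
  simp only [EpiS, mem_compl_iff, mem_setOf_eq, not_le]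
  exact lt_trans (EReal.coe_lt_coe_iff.2 hs) hz

omit [CompleteSpace X] in
lemma convex_epiS {f : X → EReal} (hconv : EConvex f) : Convex ℝ (EpiS f) := by
  rintro ⟨x, s⟩ hx ⟨y, t⟩ hy a b ha hb hab
  simp only [EpiS, mem_setOf_eq] at hx hy ⊢
  simp only [Prod.smul_fst, Prod.smul_snd, Prod.fst_add, Prod.snd_add, smul_eq_mul]
  have h := hconv x y a ha (by linarith)
  rw [show (1 - a : ℝ) = b by linarith] at h
  refine le_trans h (le_trans (add_le_add
    (mul_le_mul_of_nonneg_left hx (by exact_mod_cast ha))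
    (mul_le_mul_of_nonneg_left hy (by exact_mod_cast hb))) ?_)
  rw [← EReal.coe_mul, ← EReal.coe_mul, ← EReal.coe_add]

lemma ekeland_aux {φ : X → EReal} {b : ℝ} (hb : ∀ z, (b : EReal) ≤ φ z)
    {μ : ℝ} (hμ : 0 < μ)
    (hcl : ∀ (x : X) (r : ℝ), IsClosed {z | φ z + ((μ * ‖z - x‖ : ℝ) : EReal) ≤ (r : EReal)})
    (x₁ : X) (hx₁ : φ x₁ ≠ ⊤) :
    ∃ v : X, φ v ≤ φ x₁ ∧ ∀ z : X, φ v ≤ φ z + ((μ * ‖z - v‖ : ℝ) : EReal) := by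
  classical
  set D : X → Set X := fun x => {z | φ z + ((μ * ‖z - x‖ : ℝ) : EReal) ≤ φ x} with hD
  have hnb : ∀ z, φ z ≠ ⊥ := fun z => ne_of_gt (lt_of_lt_of_le (EReal.bot_lt_coe b) (hb z))
  have hself : ∀ x, x ∈ D x := by
    intro x
    simp only [hD, mem_setOf_eq, sub_self, norm_zero, mul_zero, EReal.coe_zero, add_zero, le_refl]
  have hmemle : ∀ {x z : X}, z ∈ D x → φ z ≤ φ x := by
    intro x z hz
    refine le_trans (le_add_of_nonneg_right ?_) hz
    exact_mod_cast mul_nonneg hμ.le (norm_nonneg _)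
  have htrans : ∀ {x z w : X}, z ∈ D x → w ∈ D z → w ∈ D x := by
    intro x z w hz hw
    simp only [hD, mem_setOf_eq] at *
    have h1 : ‖w - x‖ ≤ ‖w - z‖ + ‖z - x‖ := by
      have := dist_triangle w z x
      simpa [dist_eq_norm] using this
    have h2 : φ w + ((μ * ‖w - x‖ : ℝ) : EReal) ≤ φ w + ((μ * ‖w - z‖ + μ * ‖z - x‖ : ℝ) : EReal) := by
      refine add_le_add_right ?_ _
      exact_mod_cast by nlinarith
    refine le_trans h2 ?_
    rw [EReal.coe_add, ← add_assoc]
    exact le_trans (add_le_add_left hw _) hz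
  -- the choice step
  have step : ∀ (n : ℕ) (x : X), ∃ z, φ x ≠ ⊤ →
      (z ∈ D x ∧ ∀ w ∈ D x, φ z ≤ φ w + (((1 : ℝ) / (n + 1) : ℝ) : EReal)) := by
    intro n x
    by_cases hx : φ x = ⊤
    · exact ⟨x, fun h => absurd hx h⟩
    · set m := sInf (φ '' D x) with hm
      have hmle : m ≤ φ x := sInf_le ⟨x, hself x, rfl⟩
      have hmge : (b : EReal) ≤ m := le_sInf (by rintro _ ⟨z, _, rfl⟩; exact hb z)
      have hmt : m ≠ ⊤ := fun h => hx (top_le_iff.1 (h ▸ hmle))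
      have hmb : m ≠ ⊥ := ne_of_gt (lt_of_lt_of_le (EReal.bot_lt_coe b) hmge)
      have hlt : m < m + (((1 : ℝ) / (n + 1) : ℝ) : EReal) := by
        rw [← EReal.coe_toReal hmt hmb, ← EReal.coe_add, EReal.coe_lt_coe_iff]
        have : (0 : ℝ) < 1 / (n + 1) := by positivity
        linarith
      obtain ⟨_, ⟨z, hzD, rfl⟩, hzlt⟩ := sInf_lt_iff.1 hlt
      refine ⟨z, fun _ => ⟨hzD, fun w hw => ?_⟩⟩
      exact le_trans hzlt.le (add_le_add_left (sInf_le (Set.mem_image_of_mem φ hw)) _)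
  choose next hnext using step
  set u : ℕ → X := fun n => Nat.rec x₁ (fun n x => next n x) n with hu
  have huS : ∀ n, u (n + 1) = next n (u n) := fun n => rfl
  have hkey : ∀ n, φ (u n) ≠ ⊤ := by
    intro n
    induction n with
    | zero => exact hx₁
    | succ n ih =>
        have h := (hnext n (u n) ih).1
        rw [← huS n] at h
        exact fun ht => ih (top_le_iff.1 (ht ▸ hmemle h))
  have hmem : ∀ n, u (n + 1) ∈ D (u n) := by
    intro n
    have h := (hnext n (u n) (hkey n)).1
    rwa [← huS n] at h
  have hinf : ∀ n, ∀ w ∈ D (u n), φ (u (n + 1)) ≤ φ w + (((1 : ℝ) / (n + 1) : ℝ) : EReal) := by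
    intro n
    have h := (hnext n (u n) (hkey n)).2
    rwa [← huS n] at h
  have hchain : ∀ n k, n ≤ k → u k ∈ D (u n) := by
    intro n k hnk
    induction k with
    | zero => rw [Nat.le_zero.1 hnk]; exact hself _
    | succ k ih =>
        rcases Nat.lt_or_ge n (k + 1) with hl | hg
        · exact htrans (ih (Nat.lt_succ_iff.1 hl)) (hmem k)
        · rw [Nat.le_antisymm hnk hg]; exact hself _
  -- distance bound for members of D (u (n+1))
  have hdist : ∀ n, ∀ w ∈ D (u (n + 1)), μ * ‖w - u (n + 1)‖ ≤ 1 / (n + 1) := by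
    intro n w hw
    have hwn : w ∈ D (u n) := htrans (hmem n) hw
    have h1 : φ (u (n + 1)) ≤ φ w + (((1 : ℝ) / (n + 1) : ℝ) : EReal) := hinf n w hwn
    have h2 : φ w + ((μ * ‖w - u (n + 1)‖ : ℝ) : EReal) ≤ φ w + (((1 : ℝ) / (n + 1) : ℝ) : EReal) :=
      le_trans hw h1
    have hwt : φ w ≠ ⊤ := fun ht => (hkey (n + 1)) (top_le_iff.1 (ht ▸ hmemle hw))
    rw [← EReal.coe_toReal hwt (hnb w), ← EReal.coe_add, ← EReal.coe_add,
      EReal.coe_le_coe_iff] at h2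
    linarith
  have hCauchy : CauchySeq u := by
    rw [Metric.cauchySeq_iff']
    intro ε hε
    obtain ⟨n₀, hn₀⟩ := exists_nat_gt (1 / (μ * ε))
    refine ⟨n₀ + 1, fun n hn => ?_⟩
    have h := hdist n₀ (u n) (hchain _ _ hn)
    rw [dist_eq_norm]
    have hpos : (0:ℝ) < n₀ + 1 := by positivity
    have h2 : 1 / ((n₀ : ℝ) + 1) < μ * ε := by
      rw [div_lt_iff₀ hpos]
      rw [div_lt_iff₀ (by positivity : (0:ℝ) < μ * ε)] at hn₀
      nlinarith
    nlinarith [norm_nonneg (u n - u (n₀ + 1))]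
  obtain ⟨v, hv⟩ := cauchySeq_tendsto_of_complete hCauchy
  have hvD : ∀ n, v ∈ D (u n) := by
    intro n
    have hDeq : D (u n) = {z | φ z + ((μ * ‖z - u n‖ : ℝ) : EReal) ≤ (((φ (u n)).toReal : ℝ) : EReal)} := by
      rw [hD]
      simp only [EReal.coe_toReal (hkey n) (hnb (u n))]
    rw [hDeq]
    refine (hcl (u n) _).mem_of_tendsto hv (eventually_atTop.2 ⟨n, fun k hk => ?_⟩)
    have := hchain n k hk
    rw [hDeq] at this
    exact this
  have hfv : φ v ≤ φ x₁ := hmemle (hvD 0)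
  refine ⟨v, hfv, fun z => ?_⟩
  by_contra hzc
  rw [not_le] at hzc
  have hzD : z ∈ D v := le_of_lt hzc
  have hzn : ∀ n, z ∈ D (u n) := fun n => htrans (hvD n) hzD
  have hzv : z = v := by
    have hd : ∀ n : ℕ, μ * dist z v ≤ 2 / (n + 1) := by
      intro n
      have h1 := hdist n z (hzn (n + 1))
      have h2 := hdist n v (hvD (n + 1))
      have htri : ‖z - v‖ ≤ ‖z - u (n + 1)‖ + ‖v - u (n + 1)‖ := by
        have := dist_triangle z (u (n + 1)) v
        rw [dist_eq_norm, dist_eq_norm, dist_eq_norm] at this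
        rw [norm_sub_rev (u (n+1)) v] at this
        linarith
      rw [dist_eq_norm]
      calc μ * ‖z - v‖ ≤ μ * (‖z - u (n + 1)‖ + ‖v - u (n + 1)‖) :=
            mul_le_mul_of_nonneg_left htri hμ.le
        _ = μ * ‖z - u (n + 1)‖ + μ * ‖v - u (n + 1)‖ := mul_add _ _ _
        _ ≤ 1 / (n + 1) + 1 / (n + 1) := add_le_add h1 h2
        _ = 2 / (n + 1) := by ring
    by_contra hne
    have hdpos : 0 < dist z v := dist_pos.2 hne
    obtain ⟨n, hn⟩ := exists_nat_gt (2 / (μ * dist z v))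
    have h := hd n
    have hpos : (0:ℝ) < (n:ℝ) + 1 := by positivity
    rw [div_lt_iff₀ (by positivity : (0:ℝ) < μ * dist z v)] at hn
    have : 2 / ((n:ℝ) + 1) < μ * dist z v := by
      rw [div_lt_iff₀ hpos]
      nlinarith
    linarith
  rw [hzv] at hzc
  simp only [sub_self, norm_zero, mul_zero, EReal.coe_zero, add_zero] at hzc
  exact absurd hzc (lt_irrefl _)


omit [CompleteSpace X] in
lemma clm_prod_decomp (F : (X × ℝ) →L[ℝ] ℝ) (z : X) (t : ℝ) :
    F (z, t) = F (z, 0) + t * F (0, 1) := by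
  have h : (z, t) = (z, (0:ℝ)) + t • ((0:X), (1:ℝ)) := by
    simp [Prod.ext_iff]
  rw [h, map_add, map_smul, smul_eq_mul]

set_option maxHeartbeats 2000000 in
theorem stmt0 (f : X → EReal) (hproper : EProper f) (hconv : EConvex f)
    (hlsc : LowerSemicontinuous f)
    (h : ∀ x : X, ∀ p ∈ Subdiff f x, (0 : ℝ) ≤ p x) :
    (0 : X →L[ℝ] ℝ) ∈ Subdiff f 0 := by
  by_contra hcon
  simp only [Subdiff, mem_setOf_eq, not_forall] at hcon
  obtain ⟨y₀, hy₀⟩ := hcon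
  rw [not_le] at hy₀
  simp only [ContinuousLinearMap.zero_apply, EReal.coe_zero, add_zero] at hy₀
  -- hy₀ : f y₀ < f 0
  have hbot := hproper.2
  have hy₀top : f y₀ ≠ ⊤ := (lt_of_lt_of_le hy₀ le_top).ne
  set r₀ : ℝ := (f y₀).toReal with hr₀def
  have hr₀ : f y₀ = (r₀ : EReal) := (EReal.coe_toReal hy₀top (hbot y₀)).symm
  -- find θ > 0 with r₀ + θ < f 0
  obtain ⟨θ, θpos, hθ⟩ : ∃ θ : ℝ, 0 < θ ∧ ((r₀ + θ : ℝ) : EReal) < f 0 := by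
    by_cases ht : f 0 = ⊤
    · exact ⟨1, one_pos, ht ▸ EReal.coe_lt_top _⟩
    · have h0b : f 0 ≠ ⊥ := hbot 0
      obtain ⟨s0, hs0⟩ : ∃ s0 : ℝ, f 0 = (s0 : EReal) :=
        ⟨(f 0).toReal, (EReal.coe_toReal ht h0b).symm⟩
      have hr : r₀ < s0 := by
        rw [hr₀, hs0] at hy₀; exact_mod_cast hy₀
      refine ⟨(s0 - r₀) / 2, by linarith, ?_⟩
      rw [hs0, EReal.coe_lt_coe_iff]
      linarith
  -- epigraph
  have hEcl : IsClosed (EpiS f) := isClosed_epiS hlsc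
  have hEcv : Convex ℝ (EpiS f) := convex_epiS hconv
  -- affine minorant via Hahn-Banach
  have hpt : ((y₀, r₀ - 1) : X × ℝ) ∉ EpiS f := by
    simp only [EpiS, mem_setOf_eq, hr₀, EReal.coe_le_coe_iff]
    linarith
  obtain ⟨F₁, u₁, hF₁, hu₁⟩ := geometric_hahn_banach_closed_point hEcv hEcl hpt
  set ℓ : X → ℝ := fun z => F₁ (z, 0) with hℓdef
  set β₁ : ℝ := F₁ (0, 1) with hβ₁def
  have hdec₁ : ∀ (z : X) (t : ℝ), F₁ (z, t) = ℓ z + t * β₁ := fun z t => clm_prod_decomp F₁ z t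
  have hβ₁neg : β₁ < 0 := by
    have h1 : F₁ (y₀, r₀) < u₁ := hF₁ _ (by simp only [EpiS, mem_setOf_eq]; exact hr₀.le)
    rw [hdec₁] at h1 hu₁
    nlinarith
  set R : ℝ := ‖y₀‖ + 1 with hRdef
  have hRpos : 0 < R := by positivity
  set b : ℝ := (-(‖F₁‖ * (R + 1)) - u₁) / (-β₁) with hbdef
  have hball : ∀ z : X, ‖z‖ ≤ R → (b : EReal) ≤ f z := by
    intro z hz
    by_cases hzt : f z = ⊤
    · rw [hzt]; exact le_top
    · have hzr : f z = (((f z).toReal : ℝ) : EReal) := (EReal.coe_toReal hzt (hbot z)).symm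
      have hmem : ((z, (f z).toReal) : X × ℝ) ∈ EpiS f := by
        simp only [EpiS, mem_setOf_eq]; exact hzr.le
      have h1 : F₁ (z, (f z).toReal) < u₁ := hF₁ _ hmem
      rw [hdec₁] at h1
      have hlb : -(‖F₁‖ * (R + 1)) ≤ ℓ z := by
        have h2 : |ℓ z| ≤ ‖F₁‖ * ‖(z, (0:ℝ))‖ := by
          have := F₁.le_opNorm (z, (0:ℝ))
          rwa [Real.norm_eq_abs] at this
        have h3 : ‖((z, (0:ℝ)) : X × ℝ)‖ ≤ R + 1 := by
          rw [Prod.norm_def]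
          simp only [norm_zero]
          rw [max_eq_left (norm_nonneg z)]
          linarith
        have h4 : |ℓ z| ≤ ‖F₁‖ * (R + 1) :=
          le_trans h2 (mul_le_mul_of_nonneg_left h3 (norm_nonneg F₁))
        linarith [neg_abs_le (ℓ z)]
      have hb2 : b ≤ (f z).toReal := by
        rw [hbdef, div_le_iff₀ (by linarith : (0:ℝ) < -β₁)]
        nlinarith
      rw [hzr]
      exact_mod_cast hb2
  -- the perturbed function
  set lam : ℝ := θ / (2 * R) with hlamdef
  have hlampos : 0 < lam := by positivity
  set μ : ℝ := lam / 2 with hμdef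
  have hμpos : 0 < μ := by positivity
  set φ : X → EReal := fun z => if ‖z‖ ≤ R then f z + ((lam * ‖z‖ : ℝ) : EReal) else ⊤ with hφdef
  set b' : ℝ := min b 0 with hb'def
  have hφb : ∀ z, (b' : EReal) ≤ φ z := by
    intro z
    simp only [hφdef]
    by_cases hz : ‖z‖ ≤ R
    · rw [if_pos hz]
      calc ((b' : ℝ) : EReal) ≤ ((b : ℝ) : EReal) := by
            exact_mod_cast min_le_left b 0
        _ ≤ f z := hball z hz
        _ ≤ f z + ((lam * ‖z‖ : ℝ) : EReal) := le_add_of_nonneg_right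
            (by exact_mod_cast (by positivity : (0:ℝ) ≤ lam * ‖z‖))
    · rw [if_neg hz]; exact le_top
  have hφcl : ∀ (x : X) (r : ℝ),
      IsClosed {z | φ z + ((μ * ‖z - x‖ : ℝ) : EReal) ≤ (r : EReal)} := by
    intro x r
    have hset : {z | φ z + ((μ * ‖z - x‖ : ℝ) : EReal) ≤ (r : EReal)} =
        {z : X | ‖z‖ ≤ R} ∩ (fun z : X => ((z, r - (lam * ‖z‖ + μ * ‖z - x‖)) : X × ℝ)) ⁻¹' EpiS f := by
      ext z
      simp only [mem_setOf_eq, mem_inter_iff, mem_preimage, EpiS]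
      constructor
      · intro hle
        by_cases hz : ‖z‖ ≤ R
        · refine ⟨hz, ?_⟩
          simp only [hφdef] at hle
          simp only [if_pos hz] at hle
          rw [add_assoc, ← EReal.coe_add] at hle
          exact (ereal_add_coe_le_coe_iff _ _ _).1 hle
        · exfalso
          simp only [hφdef] at hle
          simp only [if_neg hz] at hle
          rw [EReal.top_add_coe] at hle
          exact EReal.coe_ne_top r (top_le_iff.1 hle)
      · rintro ⟨hz, hmem⟩
        simp only [hφdef]
        simp only [if_pos hz]
        rw [add_assoc, ← EReal.coe_add]
        exact (ereal_add_coe_le_coe_iff _ _ _).2 hmem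
    rw [hset]
    refine IsClosed.inter (isClosed_le continuous_norm continuous_const) ?_
    exact hEcl.preimage (by fun_prop)
  -- apply Ekeland
  have hy₀R : ‖y₀‖ ≤ R := by rw [hRdef]; linarith
  have hφy₀ : φ y₀ = ((r₀ + lam * ‖y₀‖ : ℝ) : EReal) := by
    simp only [hφdef]
    simp only [if_pos hy₀R]
    rw [hr₀, ← EReal.coe_add]
  have hφy₀top : φ y₀ ≠ ⊤ := by rw [hφy₀]; exact EReal.coe_ne_top _
  obtain ⟨xb, hxb1, hxb2⟩ := ekeland_aux hφb hμpos hφcl y₀ hφy₀top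
  set q₀ : ℝ := r₀ + lam * ‖y₀‖ with hq₀def
  have hxbq : φ xb ≤ (q₀ : EReal) := by rw [← hφy₀]; exact hxb1
  have hq₀f0 : (q₀ : EReal) < f 0 := by
    refine lt_of_lt_of_le ?_ hθ.le
    have : lam * ‖y₀‖ < θ := by
      have h1 : lam * ‖y₀‖ ≤ lam * R := mul_le_mul_of_nonneg_left hy₀R hlampos.le
      have h2 : lam * R = θ / 2 := by rw [hlamdef]; field_simp
      linarith
    exact_mod_cast by linarith
  have hxbR : ‖xb‖ ≤ R := by
    by_contra hc
    simp only [hφdef] at hxbq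
    simp only [if_neg hc] at hxbq
    exact EReal.coe_ne_top q₀ (top_le_iff.1 hxbq)
  have hφxb : φ xb = f xb + ((lam * ‖xb‖ : ℝ) : EReal) := by
    simp only [hφdef]; rw [if_pos hxbR]
  have hfxbtop : f xb ≠ ⊤ := by
    intro hc
    rw [hφxb, hc, EReal.top_add_coe] at hxbq
    exact EReal.coe_ne_top q₀ (top_le_iff.1 hxbq)
  set vb : ℝ := (f xb).toReal with hvbdef
  have hvb : f xb = (vb : EReal) := (EReal.coe_toReal hfxbtop (hbot xb)).symm
  have hxb0 : xb ≠ 0 := by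
    intro hc
    rw [hc] at hxbq
    simp only [hφdef] at hxbq
    simp only [norm_zero, mul_zero, EReal.coe_zero, add_zero, if_pos hRpos.le] at hxbq
    exact absurd (lt_of_le_of_lt hxbq hq₀f0) (lt_irrefl _)
  have hxbnorm : 0 < ‖xb‖ := norm_pos_iff.2 hxb0
  -- Ekeland inequality in explicit form
  set V : ℝ := vb + lam * ‖xb‖ with hVdef
  have hφxbV : φ xb = (V : EReal) := by rw [hφxb, hvb, ← EReal.coe_add]
  have hEk : ∀ z : X, ‖z‖ ≤ R →
      (V : EReal) ≤ f z + ((lam * ‖z‖ + μ * ‖z - xb‖ : ℝ) : EReal) := by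
    intro z hz
    have h1 := hxb2 z
    rw [hφxbV] at h1
    simp only [hφdef] at h1
    rw [if_pos hz] at h1
    rwa [add_assoc, ← EReal.coe_add] at h1
  -- second separation
  set G₀ : X → ℝ := fun z => lam * ‖z‖ + μ * ‖z - xb‖ with hG₀def
  set O : Set (X × ℝ) := {q | ‖q.1‖ < R ∧ q.2 < V - G₀ q.1} with hOdef
  have hOopen : IsOpen O := by
    simp only [hOdef]
    have h1 : IsOpen {q : X × ℝ | ‖q.1‖ < R} := isOpen_lt (by fun_prop) continuous_const
    have h2 : IsOpen {q : X × ℝ | q.2 < V - G₀ q.1} := by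
      refine isOpen_lt continuous_snd ?_
      simp only [hG₀def]
      fun_prop
    exact h1.inter h2
  have hG₀cv : ∀ (z z' : X) (a c : ℝ), 0 ≤ a → 0 ≤ c → a + c = 1 →
      G₀ (a • z + c • z') ≤ a * G₀ z + c * G₀ z' := by
    intro z z' a c ha hc hac
    simp only [hG₀def]
    have h1 : ‖a • z + c • z'‖ ≤ a * ‖z‖ + c * ‖z'‖ := by
      refine le_trans (norm_add_le _ _) ?_
      rw [norm_smul, norm_smul, Real.norm_eq_abs, Real.norm_eq_abs, abs_of_nonneg ha,
        abs_of_nonneg hc]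
    have h2 : ‖a • z + c • z' - xb‖ ≤ a * ‖z - xb‖ + c * ‖z' - xb‖ := by
      have hxx : a • xb + c • xb = xb := by rw [← add_smul, hac, one_smul]
      have he : a • z + c • z' - xb = a • (z - xb) + c • (z' - xb) := by
        calc a • z + c • z' - xb = a • z + c • z' - (a • xb + c • xb) := by rw [hxx]
          _ = a • (z - xb) + c • (z' - xb) := by rw [smul_sub, smul_sub]; abel
      rw [he]
      refine le_trans (norm_add_le _ _) ?_
      rw [norm_smul, norm_smul, Real.norm_eq_abs, Real.norm_eq_abs, abs_of_nonneg ha,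
        abs_of_nonneg hc]
    nlinarith
  have hOconv : Convex ℝ O := by
    rintro ⟨z, s⟩ hq ⟨z', s'⟩ hq' a c ha hc hac
    simp only [hOdef, mem_setOf_eq] at hq hq'
    obtain ⟨hz1, hz2⟩ := hq
    obtain ⟨hz1', hz2'⟩ := hq'
    simp only [hOdef, mem_setOf_eq, Prod.smul_fst, Prod.smul_snd, Prod.fst_add, Prod.snd_add,
      smul_eq_mul]
    have hnorm : ‖a • z + c • z'‖ ≤ a * ‖z‖ + c * ‖z'‖ := by
      refine le_trans (norm_add_le _ _) ?_
      rw [norm_smul, norm_smul, Real.norm_eq_abs, Real.norm_eq_abs, abs_of_nonneg ha,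
        abs_of_nonneg hc]
    have hG := hG₀cv z z' a c ha hc hac
    rcases eq_or_lt_of_le ha with hae | hapos
    · have hc1 : c = 1 := by linarith
      have ha0 : a = 0 := hae.symm
      subst ha0
      subst hc1
      simp only [zero_smul, zero_add, one_smul, zero_mul, one_mul]
      exact ⟨hz1', hz2'⟩
    · have hR1 : a * R + c * R = R := by rw [← add_mul, hac, one_mul]
      have hV1 : a * (V - G₀ z) + c * (V - G₀ z') = V - (a * G₀ z + c * G₀ z') := by
        have : a * V + c * V = V := by rw [← add_mul, hac, one_mul]
        ring_nf
        ring_nf at this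
        linarith only [this]
      constructor
      · have h1 : a * ‖z‖ < a * R := mul_lt_mul_of_pos_left hz1 hapos
        have h2 : c * ‖z'‖ ≤ c * R := mul_le_mul_of_nonneg_left hz1'.le hc
        linarith only [hnorm, h1, h2, hR1]
      · have h1 : a * s < a * (V - G₀ z) := mul_lt_mul_of_pos_left hz2 hapos
        have h2 : c * s' ≤ c * (V - G₀ z') := mul_le_mul_of_nonneg_left hz2'.le hc
        linarith only [h1, h2, hG, hV1]
  have hOdisj : Disjoint O (EpiS f) := by
    rw [Set.disjoint_left]
    rintro ⟨z, t⟩ hO hmem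
    simp only [hOdef, mem_setOf_eq] at hO
    obtain ⟨hz1, hz2⟩ := hO
    simp only [EpiS, mem_setOf_eq] at hmem
    have h1 := hEk z hz1.le
    have h2 : f z + ((G₀ z : ℝ) : EReal) ≤ ((t + G₀ z : ℝ) : EReal) := by
      rw [EReal.coe_add]
      exact add_le_add_left hmem _
    have h3 : ((t + G₀ z : ℝ) : EReal) < (V : EReal) := by
      rw [EReal.coe_lt_coe_iff]
      simp only [hG₀def] at hz2 ⊢
      linarith
    have := lt_of_le_of_lt (le_trans h1 h2) h3
    exact absurd this (lt_irrefl _)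
  obtain ⟨F, u, hFO, hFE⟩ := geometric_hahn_banach_open hOconv hOopen hEcv hOdisj
  set w : X → ℝ := fun z => F (z, 0) with hwdef
  set β : ℝ := F (0, 1) with hβdef
  have hdec : ∀ (z : X) (t : ℝ), F (z, t) = w z + t * β := fun z t => clm_prod_decomp F z t
  have hβ0 : 0 ≤ β := by
    by_contra hc
    rw [not_le] at hc
    set s : ℝ := max vb ((u - w xb - 1) / β) with hsdef
    have hmem : ((xb, s) : X × ℝ) ∈ EpiS f := by
      simp only [EpiS, mem_setOf_eq, hvb]
      exact_mod_cast le_max_left _ _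
    have h1 : u ≤ w xb + s * β := by have := hFE _ hmem; rwa [hdec] at this
    have h2 : s * β ≤ u - w xb - 1 := by
      have h3 : (u - w xb - 1) / β ≤ s := le_max_right _ _
      calc s * β ≤ ((u - w xb - 1) / β) * β := by
            exact mul_le_mul_of_nonpos_right h3 hc.le
        _ = u - w xb - 1 := by field_simp [hc.ne]
    linarith
  have hβpos : 0 < β := by
    rcases eq_or_lt_of_le hβ0 with he | hl
    · exfalso
      have hmemO : ((y₀, V - G₀ y₀ - 1) : X × ℝ) ∈ O := by
        simp only [hOdef, mem_setOf_eq]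
        refine ⟨by rw [hRdef]; linarith, by linarith⟩
      have h1 : F (y₀, V - G₀ y₀ - 1) < u := hFO _ hmemO
      have h2 : u ≤ F (y₀, r₀) := hFE _ (by simp only [EpiS, mem_setOf_eq]; exact hr₀.le)
      rw [hdec] at h1 h2
      rw [← he] at h1 h2
      simp only [mul_zero, add_zero] at h1 h2
      linarith
    · exact hl
  -- key inequality (ii)
  have hii : ∀ z : X, ‖z‖ < R → w z + (V - G₀ z) * β ≤ u := by
    intro z hz
    by_contra hc
    rw [not_le] at hc
    set e : ℝ := w z + (V - G₀ z) * β - u with hedef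
    have he : 0 < e := by linarith
    set δ : ℝ := e / (2 * β) with hδdef
    have hδpos : 0 < δ := by positivity
    have hmemO : ((z, V - G₀ z - δ) : X × ℝ) ∈ O := by
      simp only [hOdef, mem_setOf_eq]
      exact ⟨hz, by linarith⟩
    have h1 : F (z, V - G₀ z - δ) < u := hFO _ hmemO
    rw [hdec] at h1
    have h2 : δ * β = e / 2 := by
      rw [hδdef]
      field_simp
    have h3 : (V - G₀ z - δ) * β = (V - G₀ z) * β - δ * β := by ring
    linarith only [h1, h2, h3, he, hedef]
  -- the s-parametrized inequality along the segment towards 0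
  set K : ℝ := -(w xb) + (lam * ‖xb‖) * β - (μ * ‖xb‖) * β with hKdef
  have hEs : ∀ s : ℝ, 0 < s → s < 1 → (w xb + vb * β) + (1 - s) * K ≤ u := by
    intro s hs0 hs1
    have hsn : ‖s • xb‖ < R := by
      rw [norm_smul, Real.norm_eq_abs, abs_of_pos hs0]
      calc s * ‖xb‖ < 1 * ‖xb‖ := mul_lt_mul_of_pos_right hs1 hxbnorm
        _ = ‖xb‖ := one_mul _
        _ ≤ R := hxbR
    have h1 := hii (s • xb) hsn
    have hws : w (s • xb) = s * w xb := by
      simp only [hwdef]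
      have : ((s • xb, (0:ℝ)) : X × ℝ) = s • ((xb, (0:ℝ)) : X × ℝ) := by
        simp [Prod.ext_iff]
      rw [this, map_smul, smul_eq_mul]
    have hGs : G₀ (s • xb) = lam * (s * ‖xb‖) + μ * ((1 - s) * ‖xb‖) := by
      simp only [hG₀def]
      have h2 : s • xb - xb = (s - 1) • xb := by
        rw [sub_smul, one_smul]
      rw [h2, norm_smul, norm_smul, Real.norm_eq_abs, Real.norm_eq_abs, abs_of_pos hs0,
        abs_of_nonpos (by linarith : s - 1 ≤ 0)]
      ring_nf
    rw [hws, hGs] at h1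
    have hVe : V = vb + lam * ‖xb‖ := hVdef
    nlinarith [h1]
  -- (iii) : w xb + vb * β ≤ u
  have hiii : w xb + vb * β ≤ u := by
    by_contra hc
    rw [not_le] at hc
    set d : ℝ := w xb + vb * β - u with hddef
    have hd : 0 < d := by linarith
    set s : ℝ := max (1/2) (1 - d / (|K| + 1)) with hsdef
    have habs : 0 < |K| + 1 := by positivity
    have hs0 : 0 < s := lt_of_lt_of_le (by norm_num) (le_max_left _ _)
    have hs1 : s < 1 := by
      rw [hsdef]
      apply max_lt (by norm_num)
      have : 0 < d / (|K| + 1) := by positivity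
      linarith
    have h1 := hEs s hs0 hs1
    have h2 : 1 - s ≤ d / (|K| + 1) := by
      have := le_max_right (1/2 : ℝ) (1 - d / (|K| + 1))
      rw [hsdef]
      linarith [le_max_right (1/2 : ℝ) (1 - d / (|K| + 1))]
    have h3 : (1 - s) * K ≥ -((1 - s) * |K|) := by
      have := neg_abs_le K
      nlinarith [sub_nonneg.2 hs1.le]
    have h4 : (1 - s) * |K| ≤ (d / (|K| + 1)) * |K| :=
      mul_le_mul_of_nonneg_right h2 (abs_nonneg K)
    have h5 : (d / (|K| + 1)) * |K| < d := by
      rw [div_mul_eq_mul_div, div_lt_iff₀ habs]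
      nlinarith [abs_nonneg K]
    nlinarith
  -- build the subgradient
  set p : X →L[ℝ] ℝ := (-(β⁻¹)) • F.comp ((ContinuousLinearMap.id ℝ X).prod 0) with hpdef
  have hpap : ∀ z : X, p z = -(β⁻¹) * w z := by
    intro z
    rw [hpdef]
    simp only [ContinuousLinearMap.smul_apply, ContinuousLinearMap.coe_comp', Function.comp_apply,
      ContinuousLinearMap.prod_apply, ContinuousLinearMap.coe_id', id_eq,
      ContinuousLinearMap.zero_apply, smul_eq_mul, hwdef]
  have hwsub : ∀ y z : X, w (y - z) = w y - w z := by
    intro y z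
    simp only [hwdef]
    have he : ((y - z, (0:ℝ)) : X × ℝ) = (y, (0:ℝ)) - (z, (0:ℝ)) := by
      simp [Prod.ext_iff]
    rw [he, map_sub]
  have hpsub : p ∈ Subdiff f xb := by
    intro y
    by_cases hyt : f y = ⊤
    · rw [hyt]; exact le_top
    · have hyr : f y = (((f y).toReal : ℝ) : EReal) := (EReal.coe_toReal hyt (hbot y)).symm
      have hmem : ((y, (f y).toReal) : X × ℝ) ∈ EpiS f := by
        simp only [EpiS, mem_setOf_eq]; exact hyr.le
      have h1 : u ≤ w y + (f y).toReal * β := by have := hFE _ hmem; rwa [hdec] at this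
      have h2 : w xb + vb * β ≤ w y + (f y).toReal * β := le_trans hiii h1
      have h3 : p (y - xb) ≤ (f y).toReal - vb := by
        rw [hpap, hwsub]
        have h4 : (w xb - w y) / β ≤ (f y).toReal - vb := by
          rw [div_le_iff₀ hβpos]
          nlinarith
        have h5 : -(β⁻¹) * (w y - w xb) = (w xb - w y) / β := by
          field_simp
          ring
        rw [h5]; exact h4
      rw [hvb, hyr, ← EReal.coe_add, EReal.coe_le_coe_iff]
      linarith
  have hppos := h xb p hpsub
  -- final contradiction
  have hKle : K ≤ 0 := by
    have h1 := hEs (1/2) (by norm_num) (by norm_num)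
    have h2 : u ≤ w xb + vb * β := by
      have := hFE _ (show ((xb, vb) : X × ℝ) ∈ EpiS f by
        simp only [EpiS, mem_setOf_eq]; exact hvb.le)
      rwa [hdec] at this
    linarith
  have hwpos : 0 < w xb := by
    rw [hKdef] at hKle
    have : (lam - μ) * ‖xb‖ * β ≤ w xb := by nlinarith
    have hlm : 0 < (lam - μ) * ‖xb‖ * β := by
      have : 0 < lam - μ := by rw [hμdef]; linarith
      positivity
    linarith
  have : p xb < 0 := by
    rw [hpap]
    have hinv : 0 < β⁻¹ := inv_pos.2 hβpos
    nlinarith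
  linarith
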